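/- The convolution on multiplicative functions on partitioned permutations, defined by (f∗g)(𝒰,γ) := Σ f(𝒱,π) g(𝒲,σ) over all (𝒱,π),(𝒲,σ) with (𝒱,π)·(𝒲,σ) = (𝒰,γ), is commutative: f∗g = g∗f for all multiplicative f, g. -/

import Mathlib

open Equiv

def orbitSetoid {α : Type*} (π : Equiv.Perm α) : Setoid α where
  r := π.SameCycle
  iseqv := ⟨fun x => Equiv.Perm.SameCycle.refl π x, fun h => h.symm, fun h h' => h.trans h'⟩

noncomputable def cycleCount {n : ℕ} (π : Equiv.Perm (Fin n)) : ℕ :=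
  Nat.card (Quotient (orbitSetoid π))

noncomputable def pLen {n : ℕ} (V : Setoid (Fin n)) : ℤ :=
  (n : ℤ) - Nat.card (Quotient V)

noncomputable def permLen {n : ℕ} (π : Equiv.Perm (Fin n)) : ℤ :=
  (n : ℤ) - cycleCount π

theorem orbitSetoid_mul_le {α : Type*} (π σ : Equiv.Perm α) :
    orbitSetoid (π * σ) ≤ orbitSetoid π ⊔ orbitSetoid σ := by
  set S := orbitSetoid π ⊔ orbitSetoid σ with hS
  have hstep : ∀ x, S x ((π * σ) x) := by
    intro x
    have h1 : S x (σ x) := Setoid.le_def.mp le_sup_right ⟨1, by simp⟩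
    have h2 : S (σ x) (π (σ x)) := Setoid.le_def.mp le_sup_left ⟨1, by simp⟩
    exact S.iseqv.trans h1 h2
  have hpow : ∀ (k : ℤ) (x : α), S x (((π * σ) ^ k) x) := by
    intro k
    induction k using Int.induction_on with
    | zero => intro x; simpa using S.iseqv.refl x
    | succ k ih =>
        intro x
        have h : ((π * σ) ^ ((k : ℤ) + 1)) x = ((π * σ) ^ (k : ℤ)) ((π * σ) x) := by
          rw [zpow_add_one]
          simp [Equiv.Perm.mul_apply]
        rw [h]
        exact S.iseqv.trans (hstep x) (ih ((π * σ) x))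
    | pred k ih =>
        intro x
        have h : ((π * σ) ^ (-(k : ℤ) - 1)) x = ((π * σ) ^ (-(k : ℤ))) ((π * σ)⁻¹ x) := by
          rw [zpow_sub_one]
          simp [Equiv.Perm.mul_apply]
        rw [h]
        have hinv : S x ((π * σ)⁻¹ x) := by
          have h2 := hstep ((π * σ)⁻¹ x)
          rw [← Equiv.Perm.mul_apply, mul_inv_cancel, Equiv.Perm.one_apply] at h2
          exact S.iseqv.symm h2
        exact S.iseqv.trans hinv (ih ((π * σ)⁻¹ x))
  rw [Setoid.le_def]
  rintro x y ⟨k, hk⟩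
  exact hk ▸ hpow k x

/-- A partitioned permutation: a pair `(𝒱, π)` with `𝒱` a partition of `{1,…,n}`
(encoded as a setoid on `Fin n`) coarser than the orbit partition of `π`. -/
structure PartitionedPerm (n : ℕ) where
  part : Setoid (Fin n)
  perm : Equiv.Perm (Fin n)
  hle : orbitSetoid perm ≤ part

/-- The length `|(𝒱,π)| := 2|𝒱| − |π|` of a partitioned permutation. -/
noncomputable def ppLen {n : ℕ} (a : PartitionedPerm n) : ℤ :=
  2 * pLen a.part - permLen a.perm

/-- The product of partitioned permutations: `(𝒱,π)·(𝒲,σ) = (𝒱∨𝒲, πσ)` if the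
lengths add up, and `0` (here: `none`) otherwise. -/
noncomputable def ppMul {n : ℕ} (a b : PartitionedPerm n) : Option (PartitionedPerm n) :=
  if ppLen a + ppLen b = 2 * pLen (a.part ⊔ b.part) - permLen (a.perm * b.perm)
  then some ⟨a.part ⊔ b.part, a.perm * b.perm,
        le_trans (orbitSetoid_mul_le a.perm b.perm) (sup_le_sup a.hle b.hle)⟩
  else none

/-- The full cycle `γ_n = (1,2,…,n)`. -/
def gammaCycle (n : ℕ) : Equiv.Perm (Fin n) := finRotate n

/-- The permutation `γ_{m,n} = (1,…,m)(m+1,…,m+n)` consisting of two full cycles. -/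
def gammaTwo (m n : ℕ) : Equiv.Perm (Fin (m + n)) :=
  (Equiv.permCongr finSumFinEquiv) (Equiv.sumCongr (finRotate m) (finRotate n))

/-- The partitioned permutation `(1_n, γ_n)`. -/
noncomputable def topGamma (n : ℕ) : PartitionedPerm n :=
  ⟨⊤, gammaCycle n, le_top⟩

/-- The partitioned permutation `(1_{m+n}, γ_{m,n})`. -/
noncomputable def topGammaTwo (m n : ℕ) : PartitionedPerm (m + n) :=
  ⟨⊤, gammaTwo m n, le_top⟩

/-- `π` is a non-crossing permutation of `{1,…,n}`: `|π| + |π⁻¹γ_n| = n − 1`. -/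
def IsNC {n : ℕ} (π : Equiv.Perm (Fin n)) : Prop :=
  permLen π + permLen (π⁻¹ * gammaCycle n) = (n : ℤ) - 1

theorem quotient_mk_perm_apply {n : ℕ} (a : PartitionedPerm n) (x : Fin n) :
    Quotient.mk a.part (a.perm x) = Quotient.mk a.part x :=
  (Quotient.sound (Setoid.le_def.mp a.hle ⟨1, by simp⟩)).symm

/-- The permutation induced by `π` on a block of `𝒱` (for a partitioned permutation
`(𝒱,π)`), transported to `Fin k` where `k` is the size of the block. -/
noncomputable def blockPerm {n : ℕ} (a : PartitionedPerm n) (c : Quotient a.part) :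
    Equiv.Perm (Fin (Nat.card {x : Fin n // Quotient.mk a.part x = c})) :=
  (Finite.equivFin _).permCongr
    (a.perm.subtypePerm (p := fun x => Quotient.mk a.part x = c)
      (fun x => by show Quotient.mk a.part (a.perm x) = c ↔ Quotient.mk a.part x = c; rw [quotient_mk_perm_apply]))

/-- A multiplicative function on partitioned permutations: its value on `(1_n, π)`
depends only on the conjugacy class of `π`, and its value on a general `(𝒱,π)`
is the product over the blocks of `𝒱` of the values on `(1_V, π|_V)`. -/
def IsMultiplicativeFn (f : ∀ n, PartitionedPerm n → ℂ) : Prop :=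
  (∀ (n : ℕ) (π σ : Equiv.Perm (Fin n)),
      f n ⟨⊤, σ * π * σ⁻¹, le_top⟩ = f n ⟨⊤, π, le_top⟩) ∧
  (∀ (n : ℕ) (a : PartitionedPerm n),
      f n a = ∏ᶠ c : Quotient a.part,
        f (Nat.card {x : Fin n // Quotient.mk a.part x = c}) ⟨⊤, blockPerm a c, le_top⟩)

/-- The convolution of functions on partitioned permutations:
`(f∗g)(𝒰,γ) = Σ_{(𝒱,π)·(𝒲,σ) = (𝒰,γ)} f(𝒱,π) g(𝒲,σ)`. -/
noncomputable def ppConv (f g : ∀ n, PartitionedPerm n → ℂ) : ∀ n, PartitionedPerm n → ℂ :=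
  fun n u =>
    ∑ᶠ p ∈ {p : PartitionedPerm n × PartitionedPerm n | ppMul p.1 p.2 = some u},
      f n p.1 * g n p.2


section AuxLemmas

variable {n : ℕ}

lemma PartitionedPerm.ext' {a b : PartitionedPerm n}
    (h1 : a.part = b.part) (h2 : a.perm = b.perm) : a = b := by
  cases a; cases b; cases h1; cases h2; rfl

lemma setoid_comap_mono {α β : Type*} (f : α → β) {r s : Setoid β} (h : r ≤ s) :
    Setoid.comap f r ≤ Setoid.comap f s := by
  rw [Setoid.le_def]
  intro x y hxy
  exact Setoid.le_def.mp h hxy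

lemma orbitSetoid_conj {α : Type*} (π σ : Equiv.Perm α) :
    orbitSetoid (π * σ * π⁻¹) = Setoid.comap π.symm (orbitSetoid σ) := by
  apply Setoid.ext
  intro x y
  show (π * σ * π⁻¹).SameCycle x y ↔ σ.SameCycle (π.symm x) (π.symm y)
  rw [Equiv.Perm.sameCycle_conj]
  rfl

lemma orbitSetoid_inv {α : Type*} (π : Equiv.Perm α) :
    orbitSetoid π⁻¹ = orbitSetoid π := by
  apply Setoid.ext
  intro x y
  exact Equiv.Perm.sameCycle_inv

noncomputable def quotComapEquiv {α β : Type*} (e : α ≃ β) (W : Setoid β) :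
    Quotient (Setoid.comap e W) ≃ Quotient W :=
  Quotient.congr e (fun _ _ => Iff.rfl)

lemma pLen_comap (π : Equiv.Perm (Fin n)) (W : Setoid (Fin n)) :
    pLen (Setoid.comap π.symm W) = pLen W := by
  unfold pLen
  rw [Nat.card_congr (quotComapEquiv π.symm W)]

lemma permLen_conj (π σ : Equiv.Perm (Fin n)) :
    permLen (π * σ * π⁻¹) = permLen σ := by
  unfold permLen cycleCount
  rw [orbitSetoid_conj, Nat.card_congr (quotComapEquiv π.symm (orbitSetoid σ))]

lemma sup_comap_eq {V W : Setoid (Fin n)} (π : Equiv.Perm (Fin n))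
    (h : orbitSetoid π ≤ V) : V ⊔ Setoid.comap π.symm W = V ⊔ W := by
  have hV : ∀ x : Fin n, V x (π x) := fun x =>
    Setoid.le_def.mp h ⟨1, by simp⟩
  have hV' : ∀ x : Fin n, V x (π.symm x) := fun x =>
    V.iseqv.symm (by simpa using hV (π.symm x))
  apply le_antisymm
  · apply sup_le le_sup_left
    rw [Setoid.le_def]
    intro x y hxy
    have h1 : (V ⊔ W) x (π.symm x) := Setoid.le_def.mp le_sup_left (hV' x)
    have h2 : (V ⊔ W) (π.symm x) (π.symm y) := Setoid.le_def.mp le_sup_right hxy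
    have h3 : (V ⊔ W) (π.symm y) y :=
      (V ⊔ W).iseqv.symm (Setoid.le_def.mp le_sup_left (hV' y))
    exact (V ⊔ W).iseqv.trans ((V ⊔ W).iseqv.trans h1 h2) h3
  · apply sup_le le_sup_left
    rw [Setoid.le_def]
    intro x y hxy
    set T := V ⊔ Setoid.comap π.symm W with hT
    have h1 : T x (π x) := Setoid.le_def.mp le_sup_left (hV x)
    have h2 : T (π x) (π y) := Setoid.le_def.mp le_sup_right (by
      show W (π.symm (π x)) (π.symm (π y))
      simpa using hxy)
    have h3 : T (π y) y := T.iseqv.symm (Setoid.le_def.mp le_sup_left (hV y))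
    exact T.iseqv.trans (T.iseqv.trans h1 h2) h3

/-- Conjugation of a partitioned permutation by a permutation. -/
noncomputable def ppConj (π : Equiv.Perm (Fin n)) (b : PartitionedPerm n) :
    PartitionedPerm n :=
  ⟨Setoid.comap π.symm b.part, π * b.perm * π⁻¹, by
    rw [orbitSetoid_conj]
    exact setoid_comap_mono _ b.hle⟩

lemma ppConj_inv_cancel (π : Equiv.Perm (Fin n)) (b : PartitionedPerm n) :
    ppConj π⁻¹ (ppConj π b) = b := by
  apply PartitionedPerm.ext'
  · apply Setoid.ext
    intro x y
    show b.part (π.symm ((π⁻¹).symm x)) (π.symm ((π⁻¹).symm y)) ↔ b.part x y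
    simp [Equiv.Perm.inv_def]
  · show π⁻¹ * (π * b.perm * π⁻¹) * π⁻¹⁻¹ = b.perm
    group

lemma ppLen_ppConj (π : Equiv.Perm (Fin n)) (b : PartitionedPerm n) :
    ppLen (ppConj π b) = ppLen b := by
  unfold ppLen ppConj
  simp only [pLen_comap, permLen_conj]

lemma mult_top_permCongr {f : ∀ n, PartitionedPerm n → ℂ}
    (hf : ∀ (n : ℕ) (π σ : Equiv.Perm (Fin n)),
      f n ⟨⊤, σ * π * σ⁻¹, le_top⟩ = f n ⟨⊤, π, le_top⟩)
    {k k' : ℕ} (e : Fin k ≃ Fin k') (q : Equiv.Perm (Fin k)) :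
    f k' ⟨⊤, e.permCongr q, le_top⟩ = f k ⟨⊤, q, le_top⟩ := by
  obtain rfl : k = k' := Fin.equiv_iff_eq.mp ⟨e⟩
  have he : e.permCongr q = e * q * e⁻¹ := by
    ext x
    rfl
  rw [he]
  exact hf k q e

lemma f_ppConj {f : ∀ n, PartitionedPerm n → ℂ} (hf : IsMultiplicativeFn f)
    (π : Equiv.Perm (Fin n)) (b : PartitionedPerm n) :
    f n (ppConj π b) = f n b := by
  rw [hf.2 n (ppConj π b), hf.2 n b]
  set b' := ppConj π b with hb'
  have hpart : b'.part = Setoid.comap π.symm b.part := rfl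
  let E : Quotient b'.part ≃ Quotient b.part :=
    Quotient.congr π.symm (fun _ _ => Iff.rfl)
  rw [← finprod_comp_equiv E.symm]
  apply finprod_congr
  intro c
  have hmem : ∀ x : Fin n,
      (Quotient.mk b'.part x = E.symm c) ↔ Quotient.mk b.part (π.symm x) = c := by
    intro x
    rw [Equiv.eq_symm_apply]
    exact Iff.rfl
  let ψ : {x : Fin n // Quotient.mk b.part x = c} ≃
      {x : Fin n // Quotient.mk b'.part x = E.symm c} :=
    { toFun := fun x => ⟨π x, by rw [hmem]; simpa using x.2⟩
      invFun := fun y => ⟨π.symm y, (hmem _).mp y.2⟩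
      left_inv := fun x => by apply Subtype.ext; simp
      right_inv := fun y => by apply Subtype.ext; simp }
  have hperm : blockPerm b' (E.symm c) =
      Equiv.permCongr ((Finite.equivFin _).symm.trans (ψ.trans (Finite.equivFin _)))
        (blockPerm b c) := by
    ext x
    simp only [blockPerm, Equiv.permCongr_apply, Equiv.symm_trans_apply,
      Equiv.trans_apply, Equiv.symm_symm, Equiv.symm_apply_apply,
      Equiv.Perm.subtypePerm_apply]
    congr 1
  have h1 : (⟨⊤, blockPerm b' (E.symm c), le_top⟩ : PartitionedPerm _) =
      ⟨⊤, Equiv.permCongr ((Finite.equivFin _).symm.trans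
        (ψ.trans (Finite.equivFin _))) (blockPerm b c), le_top⟩ :=
    PartitionedPerm.ext' rfl hperm
  rw [h1]
  exact mult_top_permCongr hf.1 _ _

lemma ppMul_conj_left {a b u : PartitionedPerm n} (h : ppMul a b = some u) :
    ppMul (ppConj a.perm b) a = some u := by
  unfold ppMul at h ⊢
  by_cases hc : ppLen a + ppLen b = 2 * pLen (a.part ⊔ b.part) - permLen (a.perm * b.perm)
  · rw [if_pos hc, Option.some_inj] at h
    have hsup : (ppConj a.perm b).part ⊔ a.part = a.part ⊔ b.part := by
      rw [sup_comm]
      exact sup_comap_eq a.perm a.hle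
    have hperm : (ppConj a.perm b).perm * a.perm = a.perm * b.perm := by
      show a.perm * b.perm * a.perm⁻¹ * a.perm = _
      group
    rw [if_pos]
    · rw [Option.some_inj, ← h]
      exact PartitionedPerm.ext' hsup hperm
    · rw [hsup, hperm, ppLen_ppConj]
      linarith [hc]
  · rw [if_neg hc] at h
    exact absurd h (by simp)

lemma ppMul_conj_right {c d u : PartitionedPerm n} (h : ppMul c d = some u) :
    ppMul d (ppConj d.perm⁻¹ c) = some u := by
  unfold ppMul at h ⊢
  by_cases hc : ppLen c + ppLen d = 2 * pLen (c.part ⊔ d.part) - permLen (c.perm * d.perm)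
  · rw [if_pos hc, Option.some_inj] at h
    have hsup : d.part ⊔ (ppConj d.perm⁻¹ c).part = c.part ⊔ d.part := by
      rw [sup_comm (c.part)]
      exact sup_comap_eq d.perm⁻¹ (by rw [orbitSetoid_inv]; exact d.hle)
    have hperm : d.perm * (ppConj d.perm⁻¹ c).perm = c.perm * d.perm := by
      show d.perm * (d.perm⁻¹ * c.perm * d.perm⁻¹⁻¹) = _
      group
    rw [if_pos]
    · rw [Option.some_inj, ← h]
      exact PartitionedPerm.ext' hsup hperm
    · rw [hsup, hperm, ppLen_ppConj]
      linarith [hc]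
  · rw [if_neg hc] at h
    exact absurd h (by simp)

end AuxLemmas

/-- The convolution of multiplicative functions on partitioned permutations is
commutative: `f∗g = g∗f` for all multiplicative `f, g`. -/
theorem ppConv_comm (f g : ∀ n, PartitionedPerm n → ℂ)
    (hf : IsMultiplicativeFn f) (hg : IsMultiplicativeFn g) :
    ppConv f g = ppConv g f := by
  funext n u
  unfold ppConv
  apply finsum_mem_eq_of_bijOn (fun p : PartitionedPerm n × PartitionedPerm n =>
    (ppConj p.1.perm p.2, p.1))
  · refine ⟨?_, ?_, ?_⟩
    · intro p hp
      exact ppMul_conj_left hp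
    · intro p _ q _ hpq
      have h1 : p.1 = q.1 := congrArg Prod.snd hpq
      have h2 : ppConj p.1.perm p.2 = ppConj q.1.perm q.2 := congrArg Prod.fst hpq
      rw [h1] at h2
      have h3 : p.2 = q.2 := by
        have := congrArg (ppConj q.1.perm⁻¹) h2
        rwa [ppConj_inv_cancel, ppConj_inv_cancel] at this
      exact Prod.ext h1 h3
    · intro p hp
      refine ⟨(p.2, ppConj p.2.perm⁻¹ p.1), ?_, ?_⟩
      · exact ppMul_conj_right hp
      · show (ppConj p.2.perm (ppConj p.2.perm⁻¹ p.1), p.2) = p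
        have : ppConj p.2.perm (ppConj p.2.perm⁻¹ p.1) = p.1 := by
          have := ppConj_inv_cancel p.2.perm⁻¹ p.1
          rwa [inv_inv] at this
        rw [this]
  · intro p _
    rw [f_ppConj hg p.1.perm p.2]
    ring
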